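/- Fix k ≥ 1 and nonempty binary words u_1,…,u_k, v_1,…,v_k, each beginning with the digit 1. With M(u) = [[3^{|u|},0],[int(u),1]] ∈ ℕ^{2×2}, define A_i = blockdiag(M(u_i), M(u_i), M(v_i)) ∈ ℕ^{6×6} for 1 ≤ i ≤ k; let B ∈ ℕ^{6×6} have rows 1 and 2 equal to (int(u₁), 1, int(u₁), 1, 0, 0), rows 3 and 4 equal to (0, 0, int(u₁), 1, 0, 0), and rows 5 and 6 equal to (0, 0, 0, 0, int(v₁), 1); and let C ∈ ℕ^{6×6} have C_{3,1} = C_{5,1} = 1 and all other entries 0. Then the set {A_1,…,A_k, B, C} is synchronizable if and only if there exist t ≥ 1 and indices i_2,…,i_t ∈ {1,…,k} such that u₁u_{i_2}⋯u_{i_t} = v₁v_{i_2}⋯v_{i_t} (for t = 1 this condition reads u₁ = v₁). -/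

import Mathlib

/-- The value of a binary word (most significant digit first) read as a ternary number. -/
def ternVal (u : List Bool) : ℕ :=
  u.foldl (fun a b => 3 * a + cond b 1 0) 0

/-- `M(u) = [[3^{|u|}, 0],[int(u), 1]]`. -/
def Mword (u : List Bool) : Matrix (Fin 2) (Fin 2) ℕ :=
  !![3 ^ u.length, 0; ternVal u, 1]

/-- The `6 × 6` block-diagonal matrix with `2 × 2` diagonal blocks `X, Y, Z`. -/
def blockDiag3 (X Y Z : Matrix (Fin 2) (Fin 2) ℕ) : Matrix (Fin 6) (Fin 6) ℕ :=
  !![X 0 0, X 0 1, 0, 0, 0, 0;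
     X 1 0, X 1 1, 0, 0, 0, 0;
     0, 0, Y 0 0, Y 0 1, 0, 0;
     0, 0, Y 1 0, Y 1 1, 0, 0;
     0, 0, 0, 0, Z 0 0, Z 0 1;
     0, 0, 0, 0, Z 1 0, Z 1 1]

/-- The matrix `B` whose rows 1 and 2 are `(int u₁, 1, int u₁, 1, 0, 0)`, whose rows 3 and 4
are `(0, 0, int u₁, 1, 0, 0)`, and whose rows 5 and 6 are `(0, 0, 0, 0, int v₁, 1)`. -/
def Bbig (u₁ v₁ : List Bool) : Matrix (Fin 6) (Fin 6) ℕ :=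
  !![ternVal u₁, 1, ternVal u₁, 1, 0, 0;
     ternVal u₁, 1, ternVal u₁, 1, 0, 0;
     0, 0, ternVal u₁, 1, 0, 0;
     0, 0, ternVal u₁, 1, 0, 0;
     0, 0, 0, 0, ternVal v₁, 1;
     0, 0, 0, 0, ternVal v₁, 1]

/-- The matrix `C` with `C_{3,1} = C_{5,1} = 1` (1-indexed) and all other entries `0`. -/
def Cmat : Matrix (Fin 6) (Fin 6) ℕ :=
  !![0,0,0,0,0,0;
     0,0,0,0,0,0;
     1,0,0,0,0,0;
     0,0,0,0,0,0;
     1,0,0,0,0,0;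
     0,0,0,0,0,0]

/-- A matrix is *synchronizing* if there is a column index `i` such that an entry `A j k` is
nonzero exactly when `k = i`, and all entries of that column coincide. -/
def IsSync (A : Matrix (Fin 6) (Fin 6) ℕ) : Prop :=
  ∃ i, (∀ j k, A j k ≠ 0 ↔ k = i) ∧ (∀ j j', A j i = A j' i)

/-- A set of matrices is *synchronizable* if some nonempty finite product of its elements
(with repetitions allowed) is synchronizing. -/
def IsSynchronizable (S : Set (Matrix (Fin 6) (Fin 6) ℕ)) : Prop :=
  ∃ l : List (Matrix (Fin 6) (Fin 6) ℕ), l ≠ [] ∧ (∀ A ∈ l, A ∈ S) ∧ IsSync l.prod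

lemma ternVal_foldl (u : List Bool) (a : ℕ) :
    u.foldl (fun a b => 3 * a + cond b 1 0) a = a * 3 ^ u.length + ternVal u := by
  induction u generalizing a with
  | nil => simp [ternVal]
  | cons b t ih =>
      simp only [List.foldl_cons, ternVal, List.length_cons]
      rw [ih (3 * a + cond b 1 0), ih (3 * 0 + cond b 1 0)]
      ring

lemma ternVal_cons (b : Bool) (u : List Bool) :
    ternVal (b :: u) = (cond b 1 0) * 3 ^ u.length + ternVal u := by
  simp only [ternVal, List.foldl_cons]
  rw [ternVal_foldl]
  ring_nf
  simp [ternVal]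
  exact congrArg (fun f => List.foldl f 0 u) (funext fun a => funext fun b => by ring)

lemma ternVal_append (s t : List Bool) :
    ternVal (s ++ t) = ternVal s * 3 ^ t.length + ternVal t := by
  simp only [ternVal, List.foldl_append]
  rw [ternVal_foldl]
  rfl

lemma ternVal_lt (u : List Bool) : 2 * ternVal u + 1 ≤ 3 ^ u.length := by
  induction u with
  | nil => simp [ternVal]
  | cons b t ih =>
      rw [ternVal_cons]
      have : (3:ℕ) ^ (b :: t).length = 3 * 3 ^ t.length := by
        simp [pow_succ]; ring
      rw [this]
      cases b <;> simp <;> omega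

lemma ternVal_ge (t : List Bool) : 3 ^ t.length ≤ ternVal (true :: t) := by
  rw [ternVal_cons]; simp

lemma ternVal_pos (u : List Bool) (h : u.head? = some true) : 1 ≤ ternVal u := by
  cases u with
  | nil => simp at h
  | cons b t =>
      simp at h; subst h
      have := ternVal_ge t
      have : (1:ℕ) ≤ 3 ^ t.length := Nat.one_le_pow _ _ (by norm_num)
      omega

lemma ternVal_inj_len : ∀ (u v : List Bool), u.length = v.length →
    ternVal u = ternVal v → u = v := by
  intro u
  induction u with
  | nil => intro v h _; cases v; rfl; simp at h
  | cons a t ih =>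
      intro v h he
      cases v with
      | nil => simp at h
      | cons b s =>
          simp only [List.length_cons] at h
          have h' : t.length = s.length := by omega
          rw [ternVal_cons, ternVal_cons, h'] at he
          have h1 := ternVal_lt t
          have h2 := ternVal_lt s
          rw [h'] at h1
          have hab : a = b := by cases a <;> cases b <;> simp at he ⊢ <;> omega
          subst hab
          have : ternVal t = ternVal s := by cases a <;> simp at he <;> omega
          rw [ih s h' this]

lemma ternVal_inj (u v : List Bool) (hu : u.head? = some true)
    (hv : v.head? = some true) (h : ternVal u = ternVal v) : u = v := by
  cases u with | nil => simp at hu | cons a t =>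
  cases v with | nil => simp at hv | cons b s =>
  simp at hu hv; subst hu; subst hv
  have hlen : t.length = s.length := by
    by_contra hne
    have g1 := ternVal_ge t
    have g2 := ternVal_ge s
    have l1 := ternVal_lt (true :: t)
    have l2 := ternVal_lt (true :: s)
    simp only [List.length_cons] at l1 l2
    rcases Nat.lt_or_ge t.length s.length with hl | hl
    · have : (3:ℕ) ^ (t.length + 1) ≤ 3 ^ s.length := Nat.pow_le_pow_right (by norm_num) hl
      omega
    · have hl' : s.length < t.length := by omega
      have : (3:ℕ) ^ (s.length + 1) ≤ 3 ^ t.length := Nat.pow_le_pow_right (by norm_num) hl'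
      omega
  exact ternVal_inj_len _ _ (by simp [hlen]) h

section VecSimp
variable {α : Type*} (a b c d e f : α)
@[simp] lemma cv6_0 : ![a,b,c,d,e,f] 0 = a := rfl
@[simp] lemma cv6_1 : ![a,b,c,d,e,f] 1 = b := rfl
@[simp] lemma cv6_2 : ![a,b,c,d,e,f] 2 = c := rfl
@[simp] lemma cv6_3 : ![a,b,c,d,e,f] 3 = d := rfl
@[simp] lemma cv6_4 : ![a,b,c,d,e,f] 4 = e := rfl
@[simp] lemma cv6_5 : ![a,b,c,d,e,f] 5 = f := rfl
@[simp] lemma cv6_mk0 (h : (0:ℕ) < 6) : ![a,b,c,d,e,f] ⟨0,h⟩ = a := rfl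
@[simp] lemma cv6_mk1 (h : (1:ℕ) < 6) : ![a,b,c,d,e,f] ⟨1,h⟩ = b := rfl
@[simp] lemma cv6_mk2 (h : (2:ℕ) < 6) : ![a,b,c,d,e,f] ⟨2,h⟩ = c := rfl
@[simp] lemma cv6_mk3 (h : (3:ℕ) < 6) : ![a,b,c,d,e,f] ⟨3,h⟩ = d := rfl
@[simp] lemma cv6_mk4 (h : (4:ℕ) < 6) : ![a,b,c,d,e,f] ⟨4,h⟩ = e := rfl
@[simp] lemma cv6_mk5 (h : (5:ℕ) < 6) : ![a,b,c,d,e,f] ⟨5,h⟩ = f := rfl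
@[simp] lemma cv2_mk0 (h : (0:ℕ) < 2) : ![a,b] ⟨0,h⟩ = a := rfl
@[simp] lemma cv2_mk1 (h : (1:ℕ) < 2) : ![a,b] ⟨1,h⟩ = b := rfl
end VecSimp

def Amat (a b : List Bool) : Matrix (Fin 6) (Fin 6) ℕ :=
  blockDiag3 (Mword a) (Mword a) (Mword b)

def Bxy (x y : ℕ) : Matrix (Fin 6) (Fin 6) ℕ :=
  !![x,1,x,1,0,0; x,1,x,1,0,0; 0,0,x,1,0,0; 0,0,x,1,0,0; 0,0,0,0,y,1; 0,0,0,0,y,1]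

lemma Bbig_eq (u₁ v₁ : List Bool) : Bbig u₁ v₁ = Bxy (ternVal u₁) (ternVal v₁) := rfl

set_option maxHeartbeats 2000000 in
lemma Mword_mul (a b : List Bool) : Mword a * Mword b = Mword (a ++ b) := by
  ext i j
  fin_cases i <;> fin_cases j <;>
  · simp only [Mword, Matrix.mul_apply, Fin.sum_univ_two, Matrix.of_apply,
      cv2_mk0, cv2_mk1, Matrix.cons_val_zero, Matrix.cons_val_one, Matrix.head_cons,
      ternVal_append, List.length_append, pow_add]
    ring

set_option maxHeartbeats 2000000 in
lemma blockDiag3_mul (X Y Z X' Y' Z' : Matrix (Fin 2) (Fin 2) ℕ) :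
    blockDiag3 X Y Z * blockDiag3 X' Y' Z' = blockDiag3 (X*X') (Y*Y') (Z*Z') := by
  ext i j
  fin_cases i <;> fin_cases j <;>
  · simp only [blockDiag3, Matrix.mul_apply, Fin.sum_univ_six, Fin.sum_univ_two,
      Matrix.of_apply, cv6_0, cv6_1, cv6_2, cv6_3, cv6_4, cv6_5,
      cv6_mk0, cv6_mk1, cv6_mk2, cv6_mk3, cv6_mk4, cv6_mk5, cv2_mk0, cv2_mk1,
      Matrix.cons_val_zero, Matrix.cons_val_one, Matrix.head_cons]
    ring

set_option maxHeartbeats 2000000 in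
lemma blockDiag3_one : blockDiag3 1 1 1 = 1 := by
  ext i j
  fin_cases i <;> fin_cases j <;> first | rfl | decide

set_option maxHeartbeats 2000000 in
lemma Mword_nil : Mword [] = 1 := by
  ext i j
  fin_cases i <;> fin_cases j <;> first | rfl | decide

lemma Amat_mul (a b a' b' : List Bool) :
    Amat a b * Amat a' b' = Amat (a ++ a') (b ++ b') := by
  simp [Amat, blockDiag3_mul, Mword_mul]

lemma Amat_nil : Amat [] [] = 1 := by
  simp [Amat, Mword_nil, blockDiag3_one]

lemma Aprod {k : ℕ} (u v : Fin k → List Bool) (l : List (Fin k)) :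
    (l.map (fun i => Amat (u i) (v i))).prod
      = Amat ((l.map u).flatten) ((l.map v).flatten) := by
  induction l with
  | nil => simp [Amat_nil]
  | cons i t ih => simp [ih, Amat_mul]

set_option maxHeartbeats 2000000 in
lemma Bxy_mul_A (x y : ℕ) (a b : List Bool) :
    Bxy x y * Amat a b
      = Bxy (x * 3 ^ a.length + ternVal a) (y * 3 ^ b.length + ternVal b) := by
  ext i j
  fin_cases i <;> fin_cases j <;>
  · simp only [Bxy, Amat, blockDiag3, Mword, Matrix.mul_apply, Fin.sum_univ_six,
      Matrix.of_apply, cv6_0, cv6_1, cv6_2, cv6_3, cv6_4, cv6_5,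
      cv6_mk0, cv6_mk1, cv6_mk2, cv6_mk3, cv6_mk4, cv6_mk5, cv2_mk0, cv2_mk1,
      Matrix.cons_val_zero, Matrix.cons_val_one, Matrix.head_cons]
    ring

lemma Bbig_mul_Aprod {k : ℕ} (u v : Fin k → List Bool) (u₁ v₁ : List Bool)
    (l : List (Fin k)) :
    Bbig u₁ v₁ * (l.map (fun i => Amat (u i) (v i))).prod
      = Bxy (ternVal (u₁ ++ (l.map u).flatten)) (ternVal (v₁ ++ (l.map v).flatten)) := by
  rw [Aprod, Bbig_eq, Bxy_mul_A, ← ternVal_append, ← ternVal_append]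

def rowS (M : Matrix (Fin 6) (Fin 6) ℕ) (j : Fin 6) : ℕ := M j 0 + M j 1 + M j 2 + M j 3
def rowT (M : Matrix (Fin 6) (Fin 6) ℕ) (j : Fin 6) : ℕ := M j 4 + M j 5

lemma A_row0 (a b : List Bool) (M : Matrix (Fin 6) (Fin 6) ℕ) (m : Fin 6) :
    (Amat a b * M) 0 m = 3 ^ a.length * M 0 m := by
  simp [Amat, blockDiag3, Mword, Matrix.mul_apply, Fin.sum_univ_six]

lemma A_row1 (a b : List Bool) (M : Matrix (Fin 6) (Fin 6) ℕ) (m : Fin 6) :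
    (Amat a b * M) 1 m = ternVal a * M 0 m + M 1 m := by
  simp [Amat, blockDiag3, Mword, Matrix.mul_apply, Fin.sum_univ_six]

lemma A_row2 (a b : List Bool) (M : Matrix (Fin 6) (Fin 6) ℕ) (m : Fin 6) :
    (Amat a b * M) 2 m = 3 ^ a.length * M 2 m := by
  simp [Amat, blockDiag3, Mword, Matrix.mul_apply, Fin.sum_univ_six]

lemma A_row3 (a b : List Bool) (M : Matrix (Fin 6) (Fin 6) ℕ) (m : Fin 6) :
    (Amat a b * M) 3 m = ternVal a * M 2 m + M 3 m := by
  simp [Amat, blockDiag3, Mword, Matrix.mul_apply, Fin.sum_univ_six]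

lemma A_row4 (a b : List Bool) (M : Matrix (Fin 6) (Fin 6) ℕ) (m : Fin 6) :
    (Amat a b * M) 4 m = 3 ^ b.length * M 4 m := by
  simp [Amat, blockDiag3, Mword, Matrix.mul_apply, Fin.sum_univ_six]

lemma A_row5 (a b : List Bool) (M : Matrix (Fin 6) (Fin 6) ℕ) (m : Fin 6) :
    (Amat a b * M) 5 m = ternVal b * M 4 m + M 5 m := by
  rw [Matrix.mul_apply, Fin.sum_univ_six]
  norm_num [show Amat a b 5 0 = 0 from rfl, show Amat a b 5 1 = 0 from rfl,
    show Amat a b 5 2 = 0 from rfl, show Amat a b 5 3 = 0 from rfl,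
    show Amat a b 5 4 = ternVal b from rfl, show Amat a b 5 5 = 1 from rfl]

lemma B_row0 (u₁ v₁ : List Bool) (M : Matrix (Fin 6) (Fin 6) ℕ) (m : Fin 6) :
    (Bbig u₁ v₁ * M) 0 m
      = ternVal u₁ * M 0 m + M 1 m + ternVal u₁ * M 2 m + M 3 m := by
  simp [Bbig, Matrix.mul_apply, Fin.sum_univ_six]

lemma B_row1 (u₁ v₁ : List Bool) (M : Matrix (Fin 6) (Fin 6) ℕ) (m : Fin 6) :
    (Bbig u₁ v₁ * M) 1 m
      = ternVal u₁ * M 0 m + M 1 m + ternVal u₁ * M 2 m + M 3 m := by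
  simp [Bbig, Matrix.mul_apply, Fin.sum_univ_six]

lemma B_row2 (u₁ v₁ : List Bool) (M : Matrix (Fin 6) (Fin 6) ℕ) (m : Fin 6) :
    (Bbig u₁ v₁ * M) 2 m = ternVal u₁ * M 2 m + M 3 m := by
  simp [Bbig, Matrix.mul_apply, Fin.sum_univ_six]

lemma B_row3 (u₁ v₁ : List Bool) (M : Matrix (Fin 6) (Fin 6) ℕ) (m : Fin 6) :
    (Bbig u₁ v₁ * M) 3 m = ternVal u₁ * M 2 m + M 3 m := by
  simp [Bbig, Matrix.mul_apply, Fin.sum_univ_six]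

lemma B_row4 (u₁ v₁ : List Bool) (M : Matrix (Fin 6) (Fin 6) ℕ) (m : Fin 6) :
    (Bbig u₁ v₁ * M) 4 m = ternVal v₁ * M 4 m + M 5 m := by
  simp [Bbig, Matrix.mul_apply, Fin.sum_univ_six]

lemma B_row5 (u₁ v₁ : List Bool) (M : Matrix (Fin 6) (Fin 6) ℕ) (m : Fin 6) :
    (Bbig u₁ v₁ * M) 5 m = ternVal v₁ * M 4 m + M 5 m := by
  rw [Matrix.mul_apply, Fin.sum_univ_six]
  norm_num [show Bbig u₁ v₁ 5 0 = 0 from rfl, show Bbig u₁ v₁ 5 1 = 0 from rfl,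
    show Bbig u₁ v₁ 5 2 = 0 from rfl, show Bbig u₁ v₁ 5 3 = 0 from rfl,
    show Bbig u₁ v₁ 5 4 = ternVal v₁ from rfl, show Bbig u₁ v₁ 5 5 = 1 from rfl]

/-- The invariant maintained by all `C`-free products. -/
structure PInv (M : Matrix (Fin 6) (Fin 6) ℕ) : Prop where
  s0 : 1 ≤ rowS M 0
  s1 : 1 ≤ rowS M 1
  s2 : 1 ≤ rowS M 2
  s3 : 1 ≤ rowS M 3
  t5 : 1 ≤ rowT M 5
  t45 : rowT M 5 ≤ rowT M 4
  b04 : M 0 4 = 0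
  b05 : M 0 5 = 0
  b14 : M 1 4 = 0
  b15 : M 1 5 = 0
  b24 : M 2 4 = 0
  b25 : M 2 5 = 0
  b34 : M 3 4 = 0
  b35 : M 3 5 = 0
  b40 : M 4 0 = 0
  b41 : M 4 1 = 0
  b42 : M 4 2 = 0
  b43 : M 4 3 = 0
  b50 : M 5 0 = 0
  b51 : M 5 1 = 0
  b52 : M 5 2 = 0
  b53 : M 5 3 = 0

lemma PInv_one : PInv 1 := by
  constructor <;> norm_num [rowS, rowT, Matrix.one_apply, Fin.ext_iff] <;> decide

lemma rowS_A0 (a b : List Bool) (M : Matrix (Fin 6) (Fin 6) ℕ) :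
    rowS (Amat a b * M) 0 = 3 ^ a.length * rowS M 0 := by
  simp only [rowS, A_row0]; ring
lemma rowS_A1 (a b : List Bool) (M : Matrix (Fin 6) (Fin 6) ℕ) :
    rowS (Amat a b * M) 1 = ternVal a * rowS M 0 + rowS M 1 := by
  simp only [rowS, A_row1]; ring
lemma rowS_A2 (a b : List Bool) (M : Matrix (Fin 6) (Fin 6) ℕ) :
    rowS (Amat a b * M) 2 = 3 ^ a.length * rowS M 2 := by
  simp only [rowS, A_row2]; ring
lemma rowS_A3 (a b : List Bool) (M : Matrix (Fin 6) (Fin 6) ℕ) :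
    rowS (Amat a b * M) 3 = ternVal a * rowS M 2 + rowS M 3 := by
  simp only [rowS, A_row3]; ring
lemma rowT_A4 (a b : List Bool) (M : Matrix (Fin 6) (Fin 6) ℕ) :
    rowT (Amat a b * M) 4 = 3 ^ b.length * rowT M 4 := by
  simp only [rowT, A_row4]; ring
lemma rowT_A5 (a b : List Bool) (M : Matrix (Fin 6) (Fin 6) ℕ) :
    rowT (Amat a b * M) 5 = ternVal b * rowT M 4 + rowT M 5 := by
  simp only [rowT, A_row5]; ring

lemma rowS_B0 (u₁ v₁ : List Bool) (M : Matrix (Fin 6) (Fin 6) ℕ) :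
    rowS (Bbig u₁ v₁ * M) 0
      = ternVal u₁ * rowS M 0 + rowS M 1 + ternVal u₁ * rowS M 2 + rowS M 3 := by
  simp only [rowS, B_row0]; ring
lemma rowS_B1 (u₁ v₁ : List Bool) (M : Matrix (Fin 6) (Fin 6) ℕ) :
    rowS (Bbig u₁ v₁ * M) 1
      = ternVal u₁ * rowS M 0 + rowS M 1 + ternVal u₁ * rowS M 2 + rowS M 3 := by
  simp only [rowS, B_row1]; ring
lemma rowS_B2 (u₁ v₁ : List Bool) (M : Matrix (Fin 6) (Fin 6) ℕ) :
    rowS (Bbig u₁ v₁ * M) 2 = ternVal u₁ * rowS M 2 + rowS M 3 := by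
  simp only [rowS, B_row2]; ring
lemma rowS_B3 (u₁ v₁ : List Bool) (M : Matrix (Fin 6) (Fin 6) ℕ) :
    rowS (Bbig u₁ v₁ * M) 3 = ternVal u₁ * rowS M 2 + rowS M 3 := by
  simp only [rowS, B_row3]; ring
lemma rowT_B4 (u₁ v₁ : List Bool) (M : Matrix (Fin 6) (Fin 6) ℕ) :
    rowT (Bbig u₁ v₁ * M) 4 = ternVal v₁ * rowT M 4 + rowT M 5 := by
  simp only [rowT, B_row4]; ring
lemma rowT_B5 (u₁ v₁ : List Bool) (M : Matrix (Fin 6) (Fin 6) ℕ) :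
    rowT (Bbig u₁ v₁ * M) 5 = ternVal v₁ * rowT M 4 + rowT M 5 := by
  simp only [rowT, B_row5]; ring

lemma PInv_A (a b : List Bool) (M : Matrix (Fin 6) (Fin 6) ℕ) (hM : PInv M) :
    PInv (Amat a b * M) := by
  have hp : (1:ℕ) ≤ 3 ^ a.length := Nat.one_le_pow _ _ (by norm_num)
  have hq : 2 * ternVal b + 1 ≤ 3 ^ b.length := ternVal_lt b
  constructor
  case s0 => rw [rowS_A0]; exact le_trans hM.s0 (Nat.le_mul_of_pos_left _ hp)
  case s1 => rw [rowS_A1]; have := hM.s1; omega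
  case s2 => rw [rowS_A2]; exact le_trans hM.s2 (Nat.le_mul_of_pos_left _ hp)
  case s3 => rw [rowS_A3]; have := hM.s3; omega
  case t5 => rw [rowT_A5]; have := hM.t5; omega
  case t45 =>
      rw [rowT_A4, rowT_A5]
      have h1 := hM.t45
      have h2 := hM.t5
      nlinarith [Nat.mul_le_mul_left (rowT M 4) hq]
  case b04 => rw [A_row0, hM.b04, mul_zero]
  case b05 => rw [A_row0, hM.b05, mul_zero]
  case b14 => rw [A_row1, hM.b04, hM.b14, mul_zero, add_zero]
  case b15 => rw [A_row1, hM.b05, hM.b15, mul_zero, add_zero]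
  case b24 => rw [A_row2, hM.b24, mul_zero]
  case b25 => rw [A_row2, hM.b25, mul_zero]
  case b34 => rw [A_row3, hM.b24, hM.b34, mul_zero, add_zero]
  case b35 => rw [A_row3, hM.b25, hM.b35, mul_zero, add_zero]
  case b40 => rw [A_row4, hM.b40, mul_zero]
  case b41 => rw [A_row4, hM.b41, mul_zero]
  case b42 => rw [A_row4, hM.b42, mul_zero]
  case b43 => rw [A_row4, hM.b43, mul_zero]
  case b50 => rw [A_row5, hM.b40, hM.b50, mul_zero, add_zero]
  case b51 => rw [A_row5, hM.b41, hM.b51, mul_zero, add_zero]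
  case b52 => rw [A_row5, hM.b42, hM.b52, mul_zero, add_zero]
  case b53 => rw [A_row5, hM.b43, hM.b53, mul_zero, add_zero]

lemma PInv_B (u₁ v₁ : List Bool) (M : Matrix (Fin 6) (Fin 6) ℕ) (hM : PInv M) :
    PInv (Bbig u₁ v₁ * M) := by
  constructor
  case s0 => rw [rowS_B0]; have := hM.s1; omega
  case s1 => rw [rowS_B1]; have := hM.s1; omega
  case s2 => rw [rowS_B2]; have := hM.s3; omega
  case s3 => rw [rowS_B3]; have := hM.s3; omega
  case t5 => rw [rowT_B5]; have := hM.t5; omega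
  case t45 => rw [rowT_B4, rowT_B5]
  case b04 => rw [B_row0, hM.b04, hM.b14, hM.b24, hM.b34]; ring
  case b05 => rw [B_row0, hM.b05, hM.b15, hM.b25, hM.b35]; ring
  case b14 => rw [B_row1, hM.b04, hM.b14, hM.b24, hM.b34]; ring
  case b15 => rw [B_row1, hM.b05, hM.b15, hM.b25, hM.b35]; ring
  case b24 => rw [B_row2, hM.b24, hM.b34]; ring
  case b25 => rw [B_row2, hM.b25, hM.b35]; ring
  case b34 => rw [B_row3, hM.b24, hM.b34]; ring
  case b35 => rw [B_row3, hM.b25, hM.b35]; ring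
  case b40 => rw [B_row4, hM.b40, hM.b50]; ring
  case b41 => rw [B_row4, hM.b41, hM.b51]; ring
  case b42 => rw [B_row4, hM.b42, hM.b52]; ring
  case b43 => rw [B_row4, hM.b43, hM.b53]; ring
  case b50 => rw [B_row5, hM.b40, hM.b50]; ring
  case b51 => rw [B_row5, hM.b41, hM.b51]; ring
  case b52 => rw [B_row5, hM.b42, hM.b52]; ring
  case b53 => rw [B_row5, hM.b43, hM.b53]; ring

inductive Gen (k : ℕ) where
  | A : Fin k → Gen k
  | B : Gen k
  | C : Gen k

def gmat {k : ℕ} (u v : Fin k → List Bool) (i0 : Fin k) : Gen k → Matrix (Fin 6) (Fin 6) ℕ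
  | .A i => Amat (u i) (v i)
  | .B => Bbig (u i0) (v i0)
  | .C => Cmat

lemma PInv_prod {k : ℕ} (u v : Fin k → List Bool) (i0 : Fin k) :
    ∀ (w : List (Gen k)), (∀ g ∈ w, g ≠ Gen.C) →
      PInv ((w.map (gmat u v i0)).prod) := by
  intro w
  induction w with
  | nil => intro _; simpa using PInv_one
  | cons g t ih =>
      intro hfree
      have ht : PInv ((t.map (gmat u v i0)).prod) :=
        ih (fun g hg => hfree g (List.mem_cons_of_mem _ hg))
      rw [List.map_cons, List.prod_cons]
      cases g with
      | A i => exact PInv_A _ _ _ ht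
      | B => exact PInv_B _ _ _ ht
      | C => exact absurd rfl (hfree Gen.C List.mem_cons_self)

lemma head_contr {k : ℕ} (u v : Fin k → List Bool) (i0 : Fin k)
    (hv : ∀ i, (v i).head? = some true)
    (g : Gen k) (w' : List (Gen k)) (hfree : ∀ x ∈ g :: w', x ≠ Gen.C) :
    ¬ (rowS (((g :: w').map (gmat u v i0)).prod) 0
          = rowS (((g :: w').map (gmat u v i0)).prod) 2
        ∧ rowT (((g :: w').map (gmat u v i0)).prod) 4
          = rowT (((g :: w').map (gmat u v i0)).prod) 5) := by
  rintro ⟨hS, hT⟩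
  have hR : PInv ((w'.map (gmat u v i0)).prod) :=
    PInv_prod u v i0 w' (fun x hx => hfree x (List.mem_cons_of_mem _ hx))
  rw [List.map_cons, List.prod_cons] at hS hT
  set R := (w'.map (gmat u v i0)).prod with hRdef
  cases g with
  | C => exact absurd rfl (hfree Gen.C List.mem_cons_self)
  | A i =>
      rw [gmat, rowT_A4, rowT_A5] at hT
      have h1 : 1 ≤ ternVal (v i) := ternVal_pos _ (hv i)
      have h2 : 2 * ternVal (v i) + 1 ≤ 3 ^ (v i).length := ternVal_lt (v i)
      have h3 := hR.t5
      have h4 := hR.t45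
      nlinarith [Nat.mul_le_mul_left (rowT R 4) h2]
  | B =>
      rw [gmat, rowS_B0, rowS_B2] at hS
      have h1 := hR.s1
      have h2 := hR.s0
      nlinarith

lemma split_lastB {k : ℕ} :
    ∀ (w : List (Gen k)), (∀ g ∈ w, g ≠ Gen.C) →
      (∃ l : List (Fin k), w = l.map Gen.A) ∨
      (∃ (w₁ : List (Gen k)) (l : List (Fin k)),
        w = w₁ ++ Gen.B :: l.map Gen.A ∧ ∀ g ∈ w₁, g ≠ Gen.C) := by
  intro w
  induction w using List.reverseRecOn with
  | nil => exact fun _ => Or.inl ⟨[], rfl⟩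
  | append_singleton t g ih =>
      intro hfree
      have ht : ∀ x ∈ t, x ≠ Gen.C := fun x hx => hfree x (by simp [hx])
      cases g with
      | C => exact absurd rfl (hfree Gen.C (by simp))
      | B => exact Or.inr ⟨t, [], by simp, ht⟩
      | A i =>
          rcases ih ht with ⟨l, rfl⟩ | ⟨w₁, l, rfl, h1⟩
          · exact Or.inl ⟨l ++ [i], by simp⟩
          · exact Or.inr ⟨w₁, l ++ [i], by simp, h1⟩

lemma split_firstC {k : ℕ} :
    ∀ (w : List (Gen k)), Gen.C ∈ w →
      ∃ w₁ w₂, w = w₁ ++ Gen.C :: w₂ ∧ ∀ g ∈ w₁, g ≠ Gen.C := by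
  intro w
  induction w with
  | nil => simp
  | cons g t ih =>
      intro hm
      by_cases hg : g = Gen.C
      · exact ⟨[], t, by simp [hg], by simp⟩
      · have hmt : Gen.C ∈ t := by
          rcases List.mem_cons.1 hm with h | h
          · exact absurd h.symm hg
          · exact h
        obtain ⟨w₁, w₂, rfl, h1⟩ := ih hmt
        refine ⟨g :: w₁, w₂, by simp, ?_⟩
        intro x hx
        rcases List.mem_cons.1 hx with h | h
        · subst h; exact fun h' => hg h'
        · exact h1 x h

lemma head?_append_true (s t : List Bool) (h : s.head? = some true) :
    (s ++ t).head? = some true := by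
  cases s with
  | nil => simp at h
  | cons a s' => simp at h; simp [h]

lemma gmat_Aword {k : ℕ} (u v : Fin k → List Bool) (i0 : Fin k) (l : List (Fin k)) :
    ((l.map Gen.A).map (gmat u v i0)).prod
      = Amat ((l.map u).flatten) ((l.map v).flatten) := by
  rw [List.map_map]
  have : (gmat u v i0) ∘ Gen.A = fun i => Amat (u i) (v i) := rfl
  rw [this, Aprod]

lemma Bxy_col2 (N : Matrix (Fin 6) (Fin 6) ℕ) (x y : ℕ) (j : Fin 6) :
    (N * Bxy x y) j 2 = x * rowS N j := by
  rw [Matrix.mul_apply, Fin.sum_univ_six]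
  norm_num [show Bxy x y 0 2 = x from rfl, show Bxy x y 1 2 = x from rfl,
    show Bxy x y 2 2 = x from rfl, show Bxy x y 3 2 = x from rfl,
    show Bxy x y 4 2 = 0 from rfl, show Bxy x y 5 2 = 0 from rfl, rowS]
  ring

lemma Bxy_col4 (N : Matrix (Fin 6) (Fin 6) ℕ) (x y : ℕ) (j : Fin 6) :
    (N * Bxy x y) j 4 = y * rowT N j := by
  rw [Matrix.mul_apply, Fin.sum_univ_six]
  norm_num [show Bxy x y 0 4 = 0 from rfl, show Bxy x y 1 4 = 0 from rfl,
    show Bxy x y 2 4 = 0 from rfl, show Bxy x y 3 4 = 0 from rfl,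
    show Bxy x y 4 4 = y from rfl, show Bxy x y 5 4 = y from rfl, rowT]
  ring

lemma good_core {k : ℕ} (u v : Fin k → List Bool) (i0 : Fin k)
    (hu : ∀ i, (u i).head? = some true) (hv : ∀ i, (v i).head? = some true)
    (w : List (Gen k)) (hfree : ∀ g ∈ w, g ≠ Gen.C)
    (hpos : (w.map (gmat u v i0)).prod 0 2 + (w.map (gmat u v i0)).prod 0 4 ≠ 0)
    (hconst : ∀ j j' : Fin 6,
      (w.map (gmat u v i0)).prod j 2 + (w.map (gmat u v i0)).prod j 4
        = (w.map (gmat u v i0)).prod j' 2 + (w.map (gmat u v i0)).prod j' 4) :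
    ∃ l : List (Fin k), u i0 ++ (l.map u).flatten = v i0 ++ (l.map v).flatten := by
  rcases split_lastB w hfree with ⟨l, rfl⟩ | ⟨w₁, l, rfl, h1⟩
  · exfalso
    rw [gmat_Aword] at hpos
    exact hpos (by
      rw [show Amat ((l.map u).flatten) ((l.map v).flatten) 0 2 = 0 from rfl,
        show Amat ((l.map u).flatten) ((l.map v).flatten) 0 4 = 0 from rfl])
  · set x := ternVal (u i0 ++ (l.map u).flatten) with hxdef
    set y := ternVal (v i0 ++ (l.map v).flatten) with hydef
    have hx : 1 ≤ x := ternVal_pos _ (head?_append_true _ _ (hu i0))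
    have hy : 1 ≤ y := ternVal_pos _ (head?_append_true _ _ (hv i0))
    have hprod : ((w₁ ++ Gen.B :: l.map Gen.A).map (gmat u v i0)).prod
        = (w₁.map (gmat u v i0)).prod * Bxy x y := by
      rw [List.map_append, List.prod_append, List.map_cons, List.prod_cons]
      rw [show gmat u v i0 Gen.B = Bbig (u i0) (v i0) from rfl, gmat_Aword,
        show Amat ((l.map u).flatten) ((l.map v).flatten)
          = (l.map (fun i => Amat (u i) (v i))).prod from (Aprod u v l).symm,
        Bbig_mul_Aprod]
    rw [hprod] at hconst
    set Q := (w₁.map (gmat u v i0)).prod with hQdef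
    have hc : ∀ j j' : Fin 6, x * rowS Q j + y * rowT Q j
        = x * rowS Q j' + y * rowT Q j' := by
      intro j j'
      have := hconst j j'
      rwa [Bxy_col2, Bxy_col4, Bxy_col2, Bxy_col4] at this
    cases w₁ with
    | nil =>
        refine ⟨l, ternVal_inj _ _ (head?_append_true _ _ (hu i0))
          (head?_append_true _ _ (hv i0)) ?_⟩
        have h04 := hc 0 4
        have e1 : Q = 1 := by rw [hQdef]; simp
        rw [e1] at h04
        rw [show rowS (1 : Matrix (Fin 6) (Fin 6) ℕ) 0 = 1 by decide,
          show rowT (1 : Matrix (Fin 6) (Fin 6) ℕ) 0 = 0 by decide,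
          show rowS (1 : Matrix (Fin 6) (Fin 6) ℕ) 4 = 0 by decide,
          show rowT (1 : Matrix (Fin 6) (Fin 6) ℕ) 4 = 1 by decide] at h04
        simpa using h04
    | cons g w' =>
        exfalso
        have hQI : PInv Q := PInv_prod u v i0 (g :: w') h1
        have h02 := hc 0 2
        have h45 := hc 4 5
        have ht0 : rowT Q 0 = 0 := by rw [rowT, hQI.b04, hQI.b05]
        have ht2 : rowT Q 2 = 0 := by rw [rowT, hQI.b24, hQI.b25]
        have hs4 : rowS Q 4 = 0 := by rw [rowS, hQI.b40, hQI.b41, hQI.b42, hQI.b43]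
        have hs5 : rowS Q 5 = 0 := by rw [rowS, hQI.b50, hQI.b51, hQI.b52, hQI.b53]
        rw [ht0, ht2] at h02
        rw [hs4, hs5] at h45
        have hS : rowS Q 0 = rowS Q 2 :=
          Nat.eq_of_mul_eq_mul_left hx (by omega)
        have hT : rowT Q 4 = rowT Q 5 :=
          Nat.eq_of_mul_eq_mul_left hy (by omega)
        exact head_contr u v i0 hv g w' h1 ⟨hS, hT⟩

lemma noC_not_sync {k : ℕ} (u v : Fin k → List Bool) (i0 : Fin k)
    (w : List (Gen k)) (hfree : ∀ g ∈ w, g ≠ Gen.C) :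
    ¬ IsSync ((w.map (gmat u v i0)).prod) := by
  rintro ⟨i, hiff, -⟩
  have hI := PInv_prod u v i0 w hfree
  set P := (w.map (gmat u v i0)).prod with hP
  have h0 : P 0 0 ≠ 0 ∨ P 0 1 ≠ 0 ∨ P 0 2 ≠ 0 ∨ P 0 3 ≠ 0 := by
    have := hI.s0; rw [rowS] at this; omega
  have h4 : P 4 4 ≠ 0 ∨ P 4 5 ≠ 0 := by
    have h1 := hI.t5; have h2 := hI.t45; rw [rowT] at h1 h2; rw [rowT] at h2; omega
  have hlo : i = 0 ∨ i = 1 ∨ i = 2 ∨ i = 3 := by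
    rcases h0 with h|h|h|h
    · exact Or.inl ((hiff 0 0).1 h).symm
    · exact Or.inr (Or.inl ((hiff 0 1).1 h).symm)
    · exact Or.inr (Or.inr (Or.inl ((hiff 0 2).1 h).symm))
    · exact Or.inr (Or.inr (Or.inr ((hiff 0 3).1 h).symm))
  have hhi : i = 4 ∨ i = 5 := by
    rcases h4 with h|h
    · exact Or.inl ((hiff 4 4).1 h).symm
    · exact Or.inr ((hiff 4 5).1 h).symm
  rcases hlo with rfl|rfl|rfl|rfl <;> rcases hhi with h|h <;> exact absurd h (by decide)

lemma Crow0 (R : Matrix (Fin 6) (Fin 6) ℕ) (m : Fin 6) : (Cmat * R) 0 m = 0 := by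
  rw [Matrix.mul_apply, Fin.sum_univ_six]
  norm_num [show Cmat 0 0 = 0 from rfl, show Cmat 0 1 = 0 from rfl,
    show Cmat 0 2 = 0 from rfl, show Cmat 0 3 = 0 from rfl,
    show Cmat 0 4 = 0 from rfl, show Cmat 0 5 = 0 from rfl]

lemma Crow1 (R : Matrix (Fin 6) (Fin 6) ℕ) (m : Fin 6) : (Cmat * R) 1 m = 0 := by
  rw [Matrix.mul_apply, Fin.sum_univ_six]
  norm_num [show Cmat 1 0 = 0 from rfl, show Cmat 1 1 = 0 from rfl,
    show Cmat 1 2 = 0 from rfl, show Cmat 1 3 = 0 from rfl,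
    show Cmat 1 4 = 0 from rfl, show Cmat 1 5 = 0 from rfl]

lemma Crow2 (R : Matrix (Fin 6) (Fin 6) ℕ) (m : Fin 6) : (Cmat * R) 2 m = R 0 m := by
  rw [Matrix.mul_apply, Fin.sum_univ_six]
  norm_num [show Cmat 2 0 = 1 from rfl, show Cmat 2 1 = 0 from rfl,
    show Cmat 2 2 = 0 from rfl, show Cmat 2 3 = 0 from rfl,
    show Cmat 2 4 = 0 from rfl, show Cmat 2 5 = 0 from rfl]

lemma Crow3 (R : Matrix (Fin 6) (Fin 6) ℕ) (m : Fin 6) : (Cmat * R) 3 m = 0 := by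
  rw [Matrix.mul_apply, Fin.sum_univ_six]
  norm_num [show Cmat 3 0 = 0 from rfl, show Cmat 3 1 = 0 from rfl,
    show Cmat 3 2 = 0 from rfl, show Cmat 3 3 = 0 from rfl,
    show Cmat 3 4 = 0 from rfl, show Cmat 3 5 = 0 from rfl]

lemma Crow4 (R : Matrix (Fin 6) (Fin 6) ℕ) (m : Fin 6) : (Cmat * R) 4 m = R 0 m := by
  rw [Matrix.mul_apply, Fin.sum_univ_six]
  norm_num [show Cmat 4 0 = 1 from rfl, show Cmat 4 1 = 0 from rfl,
    show Cmat 4 2 = 0 from rfl, show Cmat 4 3 = 0 from rfl,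
    show Cmat 4 4 = 0 from rfl, show Cmat 4 5 = 0 from rfl]

lemma Crow5 (R : Matrix (Fin 6) (Fin 6) ℕ) (m : Fin 6) : (Cmat * R) 5 m = 0 := by
  rw [Matrix.mul_apply, Fin.sum_univ_six]
  norm_num [show Cmat 5 0 = 0 from rfl, show Cmat 5 1 = 0 from rfl,
    show Cmat 5 2 = 0 from rfl, show Cmat 5 3 = 0 from rfl,
    show Cmat 5 4 = 0 from rfl, show Cmat 5 5 = 0 from rfl]

lemma CR_entry (Q R : Matrix (Fin 6) (Fin 6) ℕ) (j m : Fin 6) :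
    (Q * (Cmat * R)) j m = (Q j 2 + Q j 4) * R 0 m := by
  rw [Matrix.mul_apply, Fin.sum_univ_six, Crow0, Crow1, Crow2, Crow3, Crow4, Crow5]
  ring

set_option maxHeartbeats 2000000 in
lemma BxyC (x : ℕ) :
    Bxy x x * Cmat
      = !![x,0,0,0,0,0; x,0,0,0,0,0; x,0,0,0,0,0; x,0,0,0,0,0; x,0,0,0,0,0; x,0,0,0,0,0] := by
  ext i j
  fin_cases i <;> fin_cases j <;>
  · simp only [Bxy, Cmat, Matrix.mul_apply, Fin.sum_univ_six,
      Matrix.of_apply, cv6_0, cv6_1, cv6_2, cv6_3, cv6_4, cv6_5,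
      cv6_mk0, cv6_mk1, cv6_mk2, cv6_mk3, cv6_mk4, cv6_mk5]
    ring

set_option maxHeartbeats 2000000 in
lemma sync_BxyC (x : ℕ) (hx : x ≠ 0) : IsSync (Bxy x x * Cmat) := by
  rw [BxyC]
  refine ⟨0, ?_, ?_⟩
  · intro j kk
    fin_cases j <;> fin_cases kk <;>
      simp [hx, Fin.ext_iff, Matrix.vecHead, Matrix.vecTail] <;> decide
  · intro j j'
    fin_cases j <;> fin_cases j' <;> rfl

lemma exists_word {k : ℕ} (u v : Fin k → List Bool) (i0 : Fin k) :
    ∀ (L : List (Matrix (Fin 6) (Fin 6) ℕ)),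
      (∀ X ∈ L, X ∈ insert (Bbig (u i0) (v i0)) (insert Cmat
        (Set.range fun i => blockDiag3 (Mword (u i)) (Mword (u i)) (Mword (v i))))) →
      ∃ w : List (Gen k), L = w.map (gmat u v i0) := by
  intro L
  induction L with
  | nil => exact fun _ => ⟨[], rfl⟩
  | cons X t ih =>
      intro hm
      obtain ⟨w, rfl⟩ := ih (fun Y hY => hm Y (List.mem_cons_of_mem _ hY))
      have hX := hm X List.mem_cons_self
      simp only [Set.mem_insert_iff, Set.mem_range] at hX
      rcases hX with rfl | rfl | ⟨i, rfl⟩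
      · exact ⟨Gen.B :: w, rfl⟩
      · exact ⟨Gen.C :: w, rfl⟩
      · exact ⟨Gen.A i :: w, rfl⟩

/-- For nonempty binary words `u_1, …, u_k, v_1, …, v_k` all beginning with the digit `1`,
the set `{A_1, …, A_k, B, C}` is synchronizable iff there are `t ≥ 1` and indices
`i_2, …, i_t` with `u₁ u_{i_2} ⋯ u_{i_t} = v₁ v_{i_2} ⋯ v_{i_t}`. -/
theorem fpcp_reduces_to_nat_sync {k : ℕ} (hk : 1 ≤ k) (u v : Fin k → List Bool)
    (hu : ∀ i, (u i).head? = some true) (hv : ∀ i, (v i).head? = some true) :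
    IsSynchronizable
        (insert (Bbig (u ⟨0, hk⟩) (v ⟨0, hk⟩)) (insert Cmat
          (Set.range fun i => blockDiag3 (Mword (u i)) (Mword (u i)) (Mword (v i))))) ↔
      ∃ l : List (Fin k),
        u ⟨0, hk⟩ ++ (l.map u).flatten = v ⟨0, hk⟩ ++ (l.map v).flatten := by
  constructor
  · rintro ⟨L, hne, hmem, hsync⟩
    obtain ⟨w, rfl⟩ := exists_word u v ⟨0, hk⟩ L hmem
    by_cases hC : Gen.C ∈ w
    · obtain ⟨w₁, w₂, rfl, hfree⟩ := split_firstC w hC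
      rw [List.map_append, List.prod_append, List.map_cons, List.prod_cons] at hsync
      set Q := (w₁.map (gmat u v ⟨0, hk⟩)).prod with hQ
      set R := (w₂.map (gmat u v ⟨0, hk⟩)).prod with hR
      obtain ⟨i, hiff, hconst⟩ := hsync
      have hkey : ∀ j m, (Q * (gmat u v ⟨0, hk⟩ Gen.C * R)) j m
          = (Q j 2 + Q j 4) * R 0 m := fun j m => CR_entry Q R j m
      have h0 := (hiff 0 i).2 rfl
      rw [hkey] at h0
      have hRne : R 0 i ≠ 0 := fun h => h0 (by rw [h, mul_zero])
      have hQ0 : Q 0 2 + Q 0 4 ≠ 0 := fun h => h0 (by rw [h, zero_mul])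
      have hcc : ∀ j j' : Fin 6, Q j 2 + Q j 4 = Q j' 2 + Q j' 4 := by
        intro j j'
        have h := hconst j j'
        rw [hkey, hkey] at h
        exact Nat.eq_of_mul_eq_mul_right (Nat.pos_of_ne_zero hRne) h
      exact good_core u v ⟨0, hk⟩ hu hv w₁ hfree hQ0 hcc
    · exact absurd hsync
        (noC_not_sync u v ⟨0, hk⟩ w (fun g hg h => hC (h ▸ hg)))
  · rintro ⟨l, heq⟩
    refine ⟨Bbig (u ⟨0, hk⟩) (v ⟨0, hk⟩)
        :: ((l.map (fun i => Amat (u i) (v i))) ++ [Cmat]), by simp, ?_, ?_⟩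
    · intro X hX
      simp only [List.mem_cons, List.mem_append, List.mem_map, List.mem_singleton] at hX
      rcases hX with rfl | ⟨i, _, rfl⟩ | (rfl | h)
      · exact Set.mem_insert _ _
      · exact Set.mem_insert_of_mem _ (Set.mem_insert_of_mem _ ⟨i, rfl⟩)
      · exact Set.mem_insert_of_mem _ (Set.mem_insert _ _)
      · exact absurd h List.not_mem_nil
    · rw [List.prod_cons, List.prod_append, List.prod_singleton, ← mul_assoc,
        Bbig_mul_Aprod, ← heq]
      refine sync_BxyC _ ?_
      have := ternVal_pos (u ⟨0, hk⟩ ++ (l.map u).flatten)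
        (head?_append_true (u ⟨0, hk⟩) ((l.map u).flatten) (hu ⟨0, hk⟩))
      omega
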